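/- Without the monotonicity assumption but under positivity, consistency, and Y^0 ⊥ A | X, the quantity 1 - E[Y | A = 0, X = x] / E[Y | A = 1, X = x] is a lower bound for the probability of causation P(Y^0 = 0 | Y = 1, A = 1, X = x). -/

import Mathlib

open MeasureTheory ProbabilityTheory
open scoped ENNReal

/-- Without monotonicity, but under positivity, consistency and `Y⁰ ⟂ A ∣ X`,
the quantity `1 - E[Y ∣ A = 0, X = x] / E[Y ∣ A = 1, X = x]` is a lower bound for the
probability of causation `P(Y⁰ = 0 ∣ Y = 1, A = 1, X = x)`. -/
theorem stmt_2
    {Ω 𝒳 : Type*} [MeasurableSpace Ω] [MeasurableSpace 𝒳]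
    (μ : Measure Ω) [IsProbabilityMeasure μ]
    (X : Ω → 𝒳) (A Y Y0 Y1 : Ω → ℝ) (x : 𝒳)
    (hX : Measurable X) (hA : Measurable A) (hY : Measurable Y)
    (hY0m : Measurable Y0) (hY1m : Measurable Y1)
    (hxMeas : MeasurableSet {ω | X ω = x})
    -- binary variables
    (hAbin : ∀ ω, A ω = 0 ∨ A ω = 1)
    (hYbin : ∀ ω, Y ω = 0 ∨ Y ω = 1)
    (hY0bin : ∀ ω, Y0 ω = 0 ∨ Y0 ω = 1)
    (hY1bin : ∀ ω, Y1 ω = 0 ∨ Y1 ω = 1)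
    -- consistency: A = a implies Y = Yᵃ
    (hcons0 : ∀ ω, A ω = 0 → Y ω = Y0 ω)
    (hcons1 : ∀ ω, A ω = 1 → Y ω = Y1 ω)
    -- positivity
    (hposX : μ {ω | X ω = x} ≠ 0)
    (hposA0 : μ[|{ω | X ω = x}] {ω | A ω = 0} ≠ 0)
    (hposA1 : μ[|{ω | X ω = x}] {ω | A ω = 1} ≠ 0)
    (hposYA : μ[|{ω | X ω = x}] {ω | Y ω = 1 ∧ A ω = 1} ≠ 0)
    -- no unobserved confounders: Y⁰ ⟂ A ∣ X = x
    (hnuc : ∀ s t : ℝ,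
      μ[|{ω | X ω = x}] ({ω | Y0 ω = s} ∩ {ω | A ω = t})
        = μ[|{ω | X ω = x}] {ω | Y0 ω = s} * μ[|{ω | X ω = x}] {ω | A ω = t}) :
    1 - (μ[|{ω | A ω = 0 ∧ X ω = x}] {ω | Y ω = 1}).toReal
          / (μ[|{ω | A ω = 1 ∧ X ω = x}] {ω | Y ω = 1}).toReal
      ≤ (μ[|{ω | Y ω = 1 ∧ A ω = 1 ∧ X ω = x}] {ω | Y0 ω = 0}).toReal := by
  classical
  set sX : Set Ω := {ω | X ω = x} with hsX
  have hmA0 : MeasurableSet {ω | A ω = 0} := hA (measurableSet_singleton 0)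
  have hmA1 : MeasurableSet {ω | A ω = 1} := hA (measurableSet_singleton 1)
  have hmY1 : MeasurableSet {ω | Y ω = 1} := hY (measurableSet_singleton 1)
  have hmY01 : MeasurableSet {ω | Y0 ω = 1} := hY0m (measurableSet_singleton 1)
  -- rewrite conditioning sets as intersections
  have e1 : {ω | A ω = 0 ∧ X ω = x} = sX ∩ {ω | A ω = 0} := by
    ext ω; simp only [Set.mem_inter_iff, Set.mem_setOf_eq, hsX]; tauto
  have e2 : {ω | A ω = 1 ∧ X ω = x} = sX ∩ {ω | A ω = 1} := by
    ext ω; simp only [Set.mem_inter_iff, Set.mem_setOf_eq, hsX]; tauto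
  have e3 : {ω | Y ω = 1 ∧ A ω = 1 ∧ X ω = x}
      = sX ∩ ({ω | Y ω = 1} ∩ {ω | A ω = 1}) := by
    ext ω; simp only [Set.mem_inter_iff, Set.mem_setOf_eq, hsX]; tauto
  rw [e1, e2, e3]
  -- positivity of the relevant events
  have hA0pos : 0 < μ (sX ∩ {ω | A ω = 0}) := inter_pos_of_cond_ne_zero hxMeas hposA0
  have hA1pos : 0 < μ (sX ∩ {ω | A ω = 1}) := inter_pos_of_cond_ne_zero hxMeas hposA1
  have hYApos : 0 < μ (sX ∩ ({ω | Y ω = 1} ∩ {ω | A ω = 1})) :=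
    inter_pos_of_cond_ne_zero hxMeas hposYA
  -- real-valued quantities
  set XR : ℝ := (μ sX).toReal with hXR
  set a0 : ℝ := (μ (sX ∩ {ω | A ω = 0})).toReal with ha0
  set a1 : ℝ := (μ (sX ∩ {ω | A ω = 1})).toReal with ha1
  set n0 : ℝ := (μ ((sX ∩ {ω | A ω = 0}) ∩ {ω | Y ω = 1})).toReal with hn0
  set n1 : ℝ := (μ (sX ∩ ({ω | Y ω = 1} ∩ {ω | A ω = 1}))).toReal with hn1
  set p : ℝ := (μ (sX ∩ {ω | Y0 ω = 1})).toReal with hp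
  set m11 : ℝ := (μ (sX ∩ ({ω | Y0 ω = 1} ∩ {ω | A ω = 1}))).toReal with hm11
  set t0 : ℝ := (μ ((sX ∩ ({ω | Y ω = 1} ∩ {ω | A ω = 1})) ∩ {ω | Y0 ω = 0})).toReal with ht0
  set t1 : ℝ := (μ ((sX ∩ ({ω | Y ω = 1} ∩ {ω | A ω = 1})) ∩ {ω | Y0 ω = 1})).toReal with ht1
  have hXpos : (0:ℝ) < XR := ENNReal.toReal_pos hposX (measure_ne_top μ _)
  have ha0pos : (0:ℝ) < a0 := ENNReal.toReal_pos hA0pos.ne' (measure_ne_top μ _)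
  have ha1pos : (0:ℝ) < a1 := ENNReal.toReal_pos hA1pos.ne' (measure_ne_top μ _)
  have hn1pos : (0:ℝ) < n1 := ENNReal.toReal_pos hYApos.ne' (measure_ne_top μ _)
  -- NUC in real terms: for t ∈ {0,1}, μ(sX ∩ (Y0=1 ∩ A=t)).toReal * XR = p * (μ(sX∩A=t)).toReal
  have nuc_real : ∀ t : ℝ, (μ (sX ∩ ({ω | Y0 ω = 1} ∩ {ω | A ω = t}))).toReal * XR
      = p * (μ (sX ∩ {ω | A ω = t})).toReal := by
    intro t
    have h := hnuc 1 t
    rw [cond_apply hxMeas, cond_apply hxMeas, cond_apply hxMeas] at h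
    have h' := congrArg ENNReal.toReal h
    simp only [ENNReal.toReal_mul, ENNReal.toReal_inv] at h'
    rw [← hXR, ← hp] at h'
    have hXne : XR ≠ 0 := hXpos.ne'
    field_simp at h'
    exact mul_right_cancel₀ hXne (by linear_combination XR * h')
  -- fact F1 : m11 * XR = p * a1
  have hF1 : m11 * XR = p * a1 := nuc_real 1
  -- fact F3 : n0 * XR = p * a0, using consistency on A = 0
  have hcset : sX ∩ ({ω | Y0 ω = 1} ∩ {ω | A ω = 0}) = (sX ∩ {ω | A ω = 0}) ∩ {ω | Y ω = 1} := by
    ext ω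
    simp only [Set.mem_inter_iff, Set.mem_setOf_eq, hsX]
    constructor
    · rintro ⟨hx', hy0, ha'⟩; exact ⟨⟨hx', ha'⟩, (hcons0 ω ha').trans hy0⟩
    · rintro ⟨⟨hx', ha'⟩, hy⟩; exact ⟨hx', (hcons0 ω ha').symm.trans hy, ha'⟩
  have hF3 : n0 * XR = p * a0 := by
    have := nuc_real 0
    rwa [hcset] at this
  -- partition : t0 + t1 = n1
  have hpart : t0 + t1 = n1 := by
    have hdiff : (sX ∩ ({ω | Y ω = 1} ∩ {ω | A ω = 1})) \ {ω | Y0 ω = 1}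
        = (sX ∩ ({ω | Y ω = 1} ∩ {ω | A ω = 1})) ∩ {ω | Y0 ω = 0} := by
      ext ω
      simp only [Set.mem_diff, Set.mem_inter_iff, Set.mem_setOf_eq]
      constructor
      · rintro ⟨h, h1⟩; exact ⟨h, (hY0bin ω).resolve_right h1⟩
      · rintro ⟨h, h0⟩; exact ⟨h, by rw [h0]; norm_num⟩
    have hme := measure_inter_add_diff (μ := μ)
      (sX ∩ ({ω | Y ω = 1} ∩ {ω | A ω = 1})) hmY01
    rw [hdiff] at hme
    have := congrArg ENNReal.toReal hme
    rw [ENNReal.toReal_add (measure_ne_top μ _) (measure_ne_top μ _)] at this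
    linarith [this]
  -- monotonicity : t1 ≤ m11
  have hmono : t1 ≤ m11 := by
    apply ENNReal.toReal_le_toReal (measure_ne_top μ _) (measure_ne_top μ _) |>.mpr
    apply measure_mono
    rintro ω ⟨⟨hx', _, ha'⟩, hy0⟩
    exact ⟨hx', hy0, ha'⟩
  -- expand the conditional probabilities in the goal
  rw [cond_apply (hxMeas.inter hmA0), cond_apply (hxMeas.inter hmA1),
    cond_apply (hxMeas.inter (hmY1.inter hmA1)),
    ENNReal.toReal_mul, ENNReal.toReal_mul, ENNReal.toReal_mul,
    ENNReal.toReal_inv, ENNReal.toReal_inv, ENNReal.toReal_inv,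
    show sX ∩ {ω | A ω = 1} ∩ {ω | Y ω = 1} = sX ∩ ({ω | Y ω = 1} ∩ {ω | A ω = 1}) from by
      ext ω; simp only [Set.mem_inter_iff, Set.mem_setOf_eq]; tauto,
    ← ha0, ← ha1, ← hn0, ← hn1, ← ht0]
  -- goal : 1 - (a0⁻¹ * n0) / (a1⁻¹ * n1) ≤ n1⁻¹ * t0
  have key : n1 * XR - p * a1 ≤ t0 * XR := by
    nlinarith [mul_le_mul_of_nonneg_right hmono hXpos.le]
  have hq : (a0⁻¹ * n0) / (a1⁻¹ * n1) = (p * a1) / (XR * n1) := by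
    field_simp
    linear_combination hF3
  rw [hq, inv_mul_eq_div,
    show (1:ℝ) - p * a1 / (XR * n1) = (XR * n1 - p * a1) / (XR * n1) by field_simp,
    div_le_div_iff₀ (by positivity) hn1pos]
  nlinarith [mul_le_mul_of_nonneg_right key hn1pos.le]
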